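/- (Beta-gamma thinning identity underlying the BGAR(1) process.) Let a, b, r > 0 be real numbers, and let B and R be independent real-valued random variables on a probability space such that B has the beta distribution with parameters a and b, and R has the gamma distribution with shape parameter a + b and rate parameter r. Then the product B·R has the gamma distribution with shape parameter a and rate parameter r. -/

import Mathlib

open MeasureTheory ProbabilityTheory
open Set Real
open scoped ENNReal

/-- The density of the beta distribution with parameters `a`, `b` on `(0,1)`:
`x^{a−1}(1−x)^{b−1}/B(a,b)` where `B(a,b) = Γ(a)Γ(b)/Γ(a+b)`. -/
noncomputable def betaPDFReal (a b x : ℝ) : ℝ :=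
  if 0 < x ∧ x < 1 then
    (Real.Gamma (a + b) / (Real.Gamma a * Real.Gamma b)) *
      x ^ (a - 1) * (1 - x) ^ (b - 1)
  else 0

/-- The beta distribution measure with parameters `a`, `b`. -/
noncomputable def betaMeasure (a b : ℝ) : Measure ℝ :=
  MeasureTheory.volume.withDensity fun x => ENNReal.ofReal (_root_.betaPDFReal a b x)

lemma measurable_betaPDFReal (a b : ℝ) : Measurable (_root_.betaPDFReal a b) := by
  unfold _root_.betaPDFReal
  refine Measurable.ite ?_ ?_ measurable_const
  · exact (measurableSet_lt measurable_const measurable_id).inter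
      (measurableSet_lt measurable_id measurable_const)
  · exact ((measurable_const.mul (measurable_id.pow_const _)).mul
      ((measurable_const.sub measurable_id).pow_const _))

lemma betaPDFReal_nonneg {a b : ℝ} (ha : 0 < a) (hb : 0 < b) (x : ℝ) :
    0 ≤ _root_.betaPDFReal a b x := by
  unfold _root_.betaPDFReal
  split_ifs with h
  · have h1 : (0:ℝ) < x := h.1
    have h2 : (0:ℝ) < 1 - x := by linarith [h.2]
    have := Real.Gamma_pos_of_pos ha
    have := Real.Gamma_pos_of_pos hb
    have := Real.Gamma_pos_of_pos (by linarith : (0:ℝ) < a + b)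
    positivity
  · exact le_refl 0


lemma gammaPDFReal_scale (k : ℝ) {r x : ℝ} (t : ℝ) (hr : 0 < r) (hx : 0 < x) :
    (1 / x) * gammaPDFReal k r (t / x) = gammaPDFReal k (r / x) t := by
  unfold gammaPDFReal
  have hdiv : 0 ≤ t / x ↔ 0 ≤ t := by rw [le_div_iff₀ hx]; simp
  by_cases ht : 0 ≤ t
  · rw [if_pos (hdiv.mpr ht), if_pos ht]
    have h1 : (t / x) ^ (k - 1) = t ^ (k - 1) / x ^ (k - 1) := Real.div_rpow ht hx.le _
    have h2 : (r / x) ^ k = r ^ k / x ^ k := Real.div_rpow hr.le hx.le _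
    have h3 : x ^ k = x ^ (k - 1) * x := by
      rw [← Real.rpow_add_one hx.ne']; ring_nf
    have h4 : r * (t / x) = r / x * t := by ring
    rw [h1, h2, h3, h4]
    have hg1 : x ^ (k - 1) ≠ 0 := (Real.rpow_pos_of_pos hx _).ne'
    field_simp
  · rw [if_neg (fun h => ht (hdiv.mp h)), if_neg ht, mul_zero]

lemma gammaPDF_scale (k : ℝ) {r x : ℝ} (t : ℝ) (hr : 0 < r) (hx : 0 < x) :
    ENNReal.ofReal |1 / x| * gammaPDF k r (t / x) = gammaPDF k (r / x) t := by
  rw [abs_of_pos (by positivity), gammaPDF, gammaPDF,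
    ← ENNReal.ofReal_mul (by positivity), gammaPDFReal_scale k t hr hx]

lemma lintegral_image_eq_lintegral_abs_deriv_mul' {s : Set ℝ} {f f' : ℝ → ℝ}
    (hs : MeasurableSet s) (hf' : ∀ x ∈ s, HasDerivWithinAt f (f' x) s x)
    (hf : Set.InjOn f s) (g : ℝ → ℝ≥0∞) :
    ∫⁻ x in f '' s, g x = ∫⁻ x in s, ENNReal.ofReal |f' x| * g (f x) := by
  simpa only [ContinuousLinearMap.det_toSpanSingleton] using
    lintegral_image_eq_lintegral_abs_det_fderiv_mul volume hs
      (fun x hx => (hf' x hx).hasFDerivWithinAt) hf g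

lemma gammaMeasure_mul_preimage (k : ℝ) {r x : ℝ} (hr : 0 < r) (hx : 0 < x)
    {s : Set ℝ} (hs : MeasurableSet s) :
    gammaMeasure k r ((fun y => x * y) ⁻¹' s) = ∫⁻ t in s, gammaPDF k (r / x) t := by
  have himg : (fun t : ℝ => t / x) '' s = (fun y => x * y) ⁻¹' s := by
    ext y
    simp only [Set.mem_image, Set.mem_preimage]
    constructor
    · rintro ⟨t, ht, rfl⟩
      rwa [mul_div_cancel₀ _ hx.ne']
    · intro h
      exact ⟨x * y, h, by field_simp⟩
  have hderiv : ∀ t ∈ s, HasDerivWithinAt (fun t : ℝ => t / x) (1 / x) s t := fun t _ => by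
    simpa using ((hasDerivAt_id t).div_const x).hasDerivWithinAt
  have hcov := lintegral_image_eq_lintegral_abs_deriv_mul'
    (f := fun t : ℝ => t / x) (f' := fun _ => 1 / x) hs hderiv
    (fun p _ q _ h => by field_simp at h; exact h) (gammaPDF k r)
  rw [himg] at hcov
  rw [gammaMeasure, withDensity_apply _ ((measurable_const_mul x) hs), hcov]
  exact lintegral_congr fun t => gammaPDF_scale k t hr hx
lemma key_algebra {a b r t v : ℝ} (ha : 0 < a) (hb : 0 < b) (hr : 0 < r)
    (ht : 0 < t) (hv : 0 < v) :
    (t / (t + v) ^ 2) *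
      (_root_.betaPDFReal a b (t / (t + v)) * gammaPDFReal (a + b) (r / (t / (t + v))) t)
      = gammaPDFReal a r t * gammaPDFReal b r v := by
  have hT : 0 < t + v := by linarith
  have hx1 : 0 < t / (t + v) := by positivity
  have hx2 : t / (t + v) < 1 := by rw [div_lt_one hT]; linarith
  have hrate : r / (t / (t + v)) = r * (t + v) / t := by field_simp
  unfold _root_.betaPDFReal gammaPDFReal
  rw [if_pos ⟨hx1, hx2⟩, if_pos ht.le, if_pos ht.le, if_pos hv.le]
  have h1mx : 1 - t / (t + v) = v / (t + v) := by field_simp; ring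
  have e1 : (t / (t + v)) ^ (a - 1) = t ^ (a - 1) / (t + v) ^ (a - 1) :=
    Real.div_rpow ht.le hT.le _
  have e2 : (v / (t + v)) ^ (b - 1) = v ^ (b - 1) / (t + v) ^ (b - 1) :=
    Real.div_rpow hv.le hT.le _
  have e3 : (r * (t + v) / t) ^ (a + b)
      = r ^ a * r ^ b * (t + v) ^ (a + b) / t ^ (a + b) := by
    rw [Real.div_rpow (by positivity) ht.le, Real.mul_rpow hr.le hT.le,
      ← Real.rpow_add hr]
  have e4 : (t + v) ^ (a + b)
      = (t + v) ^ (a - 1) * (t + v) ^ (b - 1) * ((t + v) * (t + v)) := by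
    rw [show a + b = ((a - 1) + (b - 1)) + 1 + 1 by ring, Real.rpow_add_one hT.ne',
      Real.rpow_add_one hT.ne', Real.rpow_add hT]
    ring
  have e5 : t ^ (a + b) = t ^ (a + b - 1) * t := by
    rw [← Real.rpow_add_one ht.ne']; ring_nf
  have e6 : Real.exp (-(r * (t + v) / t * t)) = Real.exp (-(r * t)) * Real.exp (-(r * v)) := by
    rw [← Real.exp_add]
    congr 1
    field_simp
    ring
  rw [hrate, h1mx, e1, e2, e3, e4, e5, e6]
  have hΓa := Real.Gamma_pos_of_pos ha
  have hΓb := Real.Gamma_pos_of_pos hb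
  have hΓab := Real.Gamma_pos_of_pos (by linarith : (0:ℝ) < a + b)
  have n1 : (t + v) ^ (a - 1) ≠ 0 := (Real.rpow_pos_of_pos hT _).ne'
  have n2 : (t + v) ^ (b - 1) ≠ 0 := (Real.rpow_pos_of_pos hT _).ne'
  have n3 : t ^ (a + b - 1) ≠ 0 := (Real.rpow_pos_of_pos ht _).ne'
  field_simp
lemma setLIntegral_gammaPDF_Ioi {b r : ℝ} (hb : 0 < b) (hr : 0 < r) :
    ∫⁻ v in Ioi (0:ℝ), gammaPDF b r v = 1 := by
  have h1 : ∫⁻ v in Ioi (0:ℝ), gammaPDF b r v = ∫⁻ v in Ici (0:ℝ), gammaPDF b r v :=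
    setLIntegral_congr Ioi_ae_eq_Ici
  have h2 := lintegral_add_compl (gammaPDF b r) (measurableSet_Ici (a := (0:ℝ))) (μ := volume)
  rw [compl_Ici, lintegral_gammaPDF_of_nonpos (le_refl 0), add_zero,
    lintegral_gammaPDF_eq_one hb hr] at h2
  rw [h1, h2]

lemma inner_integral_eq {a b r t : ℝ} (ha : 0 < a) (hb : 0 < b) (hr : 0 < r) (ht : 0 < t) :
    ∫⁻ x in Ioo (0:ℝ) 1,
      ENNReal.ofReal (_root_.betaPDFReal a b x) * gammaPDF (a + b) (r / x) t
      = gammaPDF a r t := by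
  set f : ℝ → ℝ := fun v => t / (t + v) with hf
  have hTpos : ∀ v ∈ Ioi (0:ℝ), 0 < t + v := fun v hv => by
    have : (0:ℝ) < v := hv
    linarith
  have himg : f '' Ioi 0 = Ioo (0:ℝ) 1 := by
    ext x
    simp only [mem_image, mem_Ioi, mem_Ioo, hf]
    constructor
    · rintro ⟨v, hv, rfl⟩
      have hT : 0 < t + v := by linarith
      exact ⟨by positivity, by rw [div_lt_one hT]; linarith⟩
    · rintro ⟨hx0, hx1⟩
      refine ⟨t / x - t, ?_, ?_⟩
      · have : t < t / x := by
          rw [lt_div_iff₀ hx0]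
          nlinarith
        linarith
      · have hx0' : x ≠ 0 := hx0.ne'
        field_simp
        have he : t * x + (t - x * t) = t := by ring
        ring
  have hderiv : ∀ v ∈ Ioi (0:ℝ), HasDerivWithinAt f (-(t / (t + v) ^ 2)) (Ioi 0) v := by
    intro v hv
    have hT : (t + v) ≠ 0 := (hTpos v hv).ne'
    have h := (hasDerivAt_const v t).div ((hasDerivAt_id v).const_add t) hT
    simp only [id_eq] at h
    have heq : (0 * (t + v) - t * 1) / (t + v) ^ 2 = -(t / (t + v) ^ 2) := by ring
    rw [heq] at h
    exact h.hasDerivWithinAt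
  have hinj : Set.InjOn f (Ioi 0) := by
    intro p hp q hq hpq
    have h1 : 0 < t + p := hTpos p hp
    have h2 : 0 < t + q := hTpos q hq
    simp only [hf] at hpq
    rw [div_eq_div_iff h1.ne' h2.ne'] at hpq
    nlinarith
  have hcov := lintegral_image_eq_lintegral_abs_deriv_mul'
    (f := f) (f' := fun v => -(t / (t + v) ^ 2)) measurableSet_Ioi hderiv hinj
    (fun x => ENNReal.ofReal (_root_.betaPDFReal a b x) * gammaPDF (a + b) (r / x) t)
  rw [himg] at hcov
  rw [hcov]
  have hptwise : ∀ v ∈ Ioi (0:ℝ),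
      ENNReal.ofReal |(-(t / (t + v) ^ 2))| *
        (ENNReal.ofReal (_root_.betaPDFReal a b (f v)) * gammaPDF (a + b) (r / f v) t)
      = ENNReal.ofReal (gammaPDFReal a r t) * gammaPDF b r v := by
    intro v hv
    have hT : 0 < t + v := hTpos v hv
    have habs : |(-(t / (t + v) ^ 2))| = t / (t + v) ^ 2 := by
      rw [abs_neg, abs_of_pos (by positivity)]
    rw [habs, gammaPDF, gammaPDF, ← ENNReal.ofReal_mul (betaPDFReal_nonneg ha hb _),
      ← ENNReal.ofReal_mul (by positivity), ← ENNReal.ofReal_mul ?hnn]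
    · congr 1
      rw [hf]
      exact key_algebra ha hb hr ht hv
    case hnn =>
      unfold gammaPDFReal
      split_ifs
      · positivity
      · exact le_refl 0
  rw [setLIntegral_congr_fun measurableSet_Ioi hptwise]
  have hmeas : Measurable (gammaPDF b r) := (measurable_gammaPDFReal b r).ennreal_ofReal
  rw [lintegral_const_mul _ hmeas, setLIntegral_gammaPDF_Ioi hb hr, mul_one]
  rfl
/-- beta-gamma thinning identity underlying the BGAR(1) process.
If `B ∼ Beta(a,b)` and `R ∼ Gamma(a+b, r)` are independent, then
`B·R ∼ Gamma(a, r)`. -/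
theorem stmt18 {Ω : Type*} {mΩ : MeasurableSpace Ω} (P : Measure Ω)
    [IsProbabilityMeasure P] (a b r : ℝ) (ha : 0 < a) (hb : 0 < b) (hr : 0 < r)
    (B R : Ω → ℝ) (hB : Measurable B) (hR : Measurable R)
    (hindep : IndepFun B R P)
    (hBlaw : P.map B = _root_.betaMeasure a b)
    (hRlaw : P.map R = gammaMeasure (a + b) r) :
    P.map (fun ω => B ω * R ω) = gammaMeasure a r := by
  have hab : (0:ℝ) < a + b := by linarith
  have hγ : IsProbabilityMeasure (gammaMeasure (a + b) r) :=
    isProbabilityMeasure_gammaMeasure hab hr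
  have hmap : P.map (fun ω => (B ω, R ω))
      = (_root_.betaMeasure a b).prod (gammaMeasure (a + b) r) := by
    rw [← hBlaw, ← hRlaw]
    exact (indepFun_iff_map_prod_eq_prod_map_map hB.aemeasurable hR.aemeasurable).mp hindep
  have hmulmeas : Measurable (fun p : ℝ × ℝ => p.1 * p.2) :=
    measurable_fst.mul measurable_snd
  have hstep : P.map (fun ω => B ω * R ω)
      = Measure.map (fun p : ℝ × ℝ => p.1 * p.2)
          ((_root_.betaMeasure a b).prod (gammaMeasure (a + b) r)) := by
    rw [← hmap, Measure.map_map hmulmeas (hB.prodMk hR)]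
    rfl
  rw [hstep]
  ext s hs
  rw [Measure.map_apply hmulmeas hs, Measure.prod_apply (hmulmeas hs)]
  -- rewrite the β-integral using the density
  have hFmeas : Measurable fun x : ℝ =>
      gammaMeasure (a + b) r (Prod.mk x ⁻¹' ((fun p : ℝ × ℝ => p.1 * p.2) ⁻¹' s)) :=
    measurable_measure_prodMk_left (hmulmeas hs)
  rw [_root_.betaMeasure, lintegral_withDensity_eq_lintegral_mul _
    (_root_.measurable_betaPDFReal a b).ennreal_ofReal hFmeas]
  simp only [Pi.mul_apply]
  -- restrict to Ioo 0 1
  have hrestrict : ∫⁻ x, ENNReal.ofReal (_root_.betaPDFReal a b x) *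
        gammaMeasure (a + b) r (Prod.mk x ⁻¹' ((fun p : ℝ × ℝ => p.1 * p.2) ⁻¹' s))
      = ∫⁻ x in Ioo (0:ℝ) 1, ENNReal.ofReal (_root_.betaPDFReal a b x) *
        gammaMeasure (a + b) r (Prod.mk x ⁻¹' ((fun p : ℝ × ℝ => p.1 * p.2) ⁻¹' s)) := by
    rw [← lintegral_indicator measurableSet_Ioo]
    apply lintegral_congr
    intro x
    by_cases hx : x ∈ Ioo (0:ℝ) 1
    · rw [Set.indicator_of_mem hx]
    · rw [Set.indicator_of_notMem hx]
      have : _root_.betaPDFReal a b x = 0 := by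
        unfold _root_.betaPDFReal
        rw [if_neg]
        simpa [Set.mem_Ioo] using hx
      rw [this, ENNReal.ofReal_zero, zero_mul]
  rw [hrestrict]
  -- rewrite the inner measure as an integral of the scaled gamma pdf
  have hstep2 : ∫⁻ x in Ioo (0:ℝ) 1, ENNReal.ofReal (_root_.betaPDFReal a b x) *
        gammaMeasure (a + b) r (Prod.mk x ⁻¹' ((fun p : ℝ × ℝ => p.1 * p.2) ⁻¹' s))
      = ∫⁻ x in Ioo (0:ℝ) 1, ∫⁻ t in s,
          ENNReal.ofReal (_root_.betaPDFReal a b x) * gammaPDF (a + b) (r / x) t := by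
    apply setLIntegral_congr_fun measurableSet_Ioo
    intro x hx
    have hgm : gammaMeasure (a + b) r
        (Prod.mk x ⁻¹' ((fun p : ℝ × ℝ => p.1 * p.2) ⁻¹' s))
        = ∫⁻ t in s, gammaPDF (a + b) (r / x) t := by
      have := gammaMeasure_mul_preimage (a + b) hr hx.1 hs
      convert this using 2
      rfl
    have hm : Measurable (gammaPDF (a + b) (r / x)) :=
      (measurable_gammaPDFReal _ _).ennreal_ofReal
    dsimp only
    rw [hgm, ← lintegral_const_mul _ hm]
  rw [hstep2]
  -- Tonelli
  have hH : Measurable (Function.uncurry fun (x t : ℝ) =>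
      ENNReal.ofReal (_root_.betaPDFReal a b x) * gammaPDF (a + b) (r / x) t) := by
    unfold Function.uncurry
    apply Measurable.fun_mul
    · exact ((_root_.measurable_betaPDFReal a b).comp measurable_fst).ennreal_ofReal
    · simp only [gammaPDF_eq]
      apply Measurable.ennreal_ofReal
      refine Measurable.ite (measurableSet_le measurable_const measurable_snd) ?_ measurable_const
      exact (((measurable_const.div measurable_fst).pow_const _).div_const _ |>.mul
        (measurable_snd.pow_const _)).mul
        (((measurable_const.div measurable_fst).mul measurable_snd).neg.exp)
  have hswap := lintegral_lintegral_swap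
    (μ := volume.restrict (Ioo (0:ℝ) 1)) (ν := volume.restrict s)
    (f := fun x t => ENNReal.ofReal (_root_.betaPDFReal a b x) * gammaPDF (a + b) (r / x) t)
    hH.aemeasurable
  rw [hswap]
  -- identify the inner integral with the gamma pdf, a.e.
  have hae : ∀ᵐ t : ℝ, (∫⁻ x in Ioo (0:ℝ) 1,
      ENNReal.ofReal (_root_.betaPDFReal a b x) * gammaPDF (a + b) (r / x) t)
      = gammaPDF a r t := by
    have hsub : {t : ℝ | ¬ ((∫⁻ x in Ioo (0:ℝ) 1,
        ENNReal.ofReal (_root_.betaPDFReal a b x) * gammaPDF (a + b) (r / x) t)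
        = gammaPDF a r t)} ⊆ {(0:ℝ)} := by
      intro t ht
      simp only [Set.mem_setOf_eq] at ht
      by_contra h0
      rcases lt_trichotomy t 0 with htneg | htzero | htpos
      · apply ht
        rw [gammaPDF_of_neg htneg]
        have : ∀ x : ℝ, ENNReal.ofReal (_root_.betaPDFReal a b x) *
            gammaPDF (a + b) (r / x) t = 0 := fun x => by
          rw [gammaPDF_of_neg htneg, mul_zero]
        simp only [this, lintegral_zero]
      · exact h0 (by simpa using htzero)
      · exact ht (inner_integral_eq ha hb hr htpos)
    exact measure_mono_null hsub volume_singleton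
  rw [lintegral_congr_ae (ae_restrict_of_ae hae), gammaMeasure, withDensity_apply _ hs]
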